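/- Let G = (V,E) be a finite simple graph with |V| = n and let γ ∈ (0,1]. Consider the program: maximize Σ_{i∈V} x_i over x ∈ {0,1}^V, reals w_i for i ∈ V, and reals s_t ≥ 0 for t ∈ {0,1,…,n}, subject to w_i ≤ deg_G(i)·x_i and w_i ≤ Σ_{j:{i,j}∈E} x_j for all i ∈ V, Σ_{t=0}^{n} s_t = 1, Σ_{i∈V} x_i = Σ_{t=0}^{n} t·s_t, and Σ_{i∈V} w_i ≥ γ · Σ_{t=0}^{n} t(t−1)·s_t. Then the optimal value of this program equals the γ-clique number ω_γ(G). -/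

import Mathlib

open Finset

/-- Number of edges of `G` with both endpoints in `V'`. -/
def edgesIn {V : Type*} [Fintype V] [DecidableEq V] (G : SimpleGraph V)
    [DecidableRel G.Adj] (V' : Finset V) : ℕ :=
  (G.edgeFinset.filter fun e => ∀ v ∈ e, v ∈ V').card

/-- `V'` is a `γ`-clique of `G`. -/
def IsQuasiClique {V : Type*} [Fintype V] [DecidableEq V] (G : SimpleGraph V)
    [DecidableRel G.Adj] (γ : ℝ) (V' : Finset V) : Prop :=
  (edgesIn G V' : ℝ) ≥ γ * (V'.card.choose 2 : ℕ)

/-- The `γ`-clique number of `G`. -/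
noncomputable def quasiCliqueNum {V : Type*} [Fintype V] [DecidableEq V]
    (G : SimpleGraph V) [DecidableRel G.Adj] (γ : ℝ) : ℕ :=
  sSup {k : ℕ | ∃ V' : Finset V, IsQuasiClique G γ V' ∧ V'.card = k}

lemma two_mul_choose_two (k : ℕ) : 2 * k.choose 2 = k * (k - 1) := by
  induction k with
  | zero => rfl
  | succ m ih =>
    rw [Nat.choose_succ_succ, Nat.choose_one_right, Nat.mul_add, ih]
    cases m with
    | zero => rfl
    | succ p => simp [Nat.succ_sub_one]; ring

lemma choose_two_real (k : ℕ) : 2 * ((k.choose 2 : ℕ) : ℝ) = (k : ℝ) * ((k : ℝ) - 1) := by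
  cases k with
  | zero => simp
  | succ m =>
    have h := two_mul_choose_two (m + 1)
    simp only [Nat.succ_sub_one] at h
    have h2 : ((2 * (m + 1).choose 2 : ℕ) : ℝ) = (((m + 1) * m : ℕ) : ℝ) := by
      exact_mod_cast h
    push_cast at h2 ⊢
    linarith

lemma handshake {V : Type*} [Fintype V] [DecidableEq V] (G : SimpleGraph V)
    [DecidableRel G.Adj] (V' : Finset V) :
    ∑ i ∈ V', (G.neighborFinset i ∩ V').card = 2 * edgesIn G V' := by
  let G' : SimpleGraph V :=
    { Adj := fun i j => G.Adj i j ∧ i ∈ V' ∧ j ∈ V'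
      symm := ⟨fun i j ⟨h, hi, hj⟩ => ⟨h.symm, hj, hi⟩⟩
      loopless := ⟨fun i ⟨h, _⟩ => G.irrefl h⟩ }
  haveI : DecidableRel G'.Adj := fun i j => instDecidableAnd
  have hedge : G'.edgeFinset = G.edgeFinset.filter fun e => ∀ v ∈ e, v ∈ V' := by
    ext e
    refine Sym2.ind (fun i j => ?_) e
    simp only [SimpleGraph.mem_edgeFinset, Finset.mem_filter, SimpleGraph.mem_edgeSet,
      Sym2.mem_iff, G']
    constructor
    · rintro ⟨h, hi, hj⟩
      exact ⟨h, fun v hv => by rcases hv with rfl | rfl <;> assumption⟩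
    · rintro ⟨h, hall⟩
      exact ⟨h, hall i (Or.inl rfl), hall j (Or.inr rfl)⟩
  have hdeg : ∀ i ∈ V', G'.degree i = (G.neighborFinset i ∩ V').card := by
    intro i hi
    rw [← SimpleGraph.card_neighborFinset_eq_degree]
    congr 1
    ext j
    simp [SimpleGraph.mem_neighborFinset, G', hi]
  have hdeg0 : ∀ i, i ∉ V' → G'.degree i = 0 := by
    intro i hi
    rw [← SimpleGraph.card_neighborFinset_eq_degree, Finset.card_eq_zero]
    ext j
    simp [SimpleGraph.mem_neighborFinset, G', hi]
  calc ∑ i ∈ V', (G.neighborFinset i ∩ V').card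
      = ∑ i ∈ V', G'.degree i := by
        exact Finset.sum_congr rfl fun i hi => (hdeg i hi).symm
    _ = ∑ i, G'.degree i := by
        exact Finset.sum_subset (Finset.subset_univ V') fun i _ hi => hdeg0 i hi
    _ = 2 * G'.edgeFinset.card := SimpleGraph.sum_degrees_eq_twice_card_edges G'
    _ = 2 * edgesIn G V' := by rw [hedge]; rfl

lemma jensen_sq (n : ℕ) (s : ℕ → ℝ) (hs : ∀ t ∈ Finset.range (n + 1), 0 ≤ s t)
    (h1 : ∑ t ∈ Finset.range (n + 1), s t = 1) :
    (∑ t ∈ Finset.range (n + 1), (t : ℝ) * s t) ^ 2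
      ≤ ∑ t ∈ Finset.range (n + 1), (t : ℝ) ^ 2 * s t := by
  have key := Finset.sum_mul_sq_le_sq_mul_sq (Finset.range (n + 1))
    (fun t => Real.sqrt (s t)) (fun t => (t : ℝ) * Real.sqrt (s t))
  have e1 : ∑ t ∈ Finset.range (n + 1), Real.sqrt (s t) * ((t : ℝ) * Real.sqrt (s t))
      = ∑ t ∈ Finset.range (n + 1), (t : ℝ) * s t := by
    refine Finset.sum_congr rfl fun t ht => ?_
    have := Real.sq_sqrt (hs t ht)
    nlinarith [Real.sqrt_nonneg (s t)]
  have e2 : ∑ t ∈ Finset.range (n + 1), Real.sqrt (s t) ^ 2 = 1 := by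
    rw [← h1]; exact Finset.sum_congr rfl fun t ht => Real.sq_sqrt (hs t ht)
  have e3 : ∑ t ∈ Finset.range (n + 1), ((t : ℝ) * Real.sqrt (s t)) ^ 2
      = ∑ t ∈ Finset.range (n + 1), (t : ℝ) ^ 2 * s t := by
    refine Finset.sum_congr rfl fun t ht => ?_
    rw [mul_pow, Real.sq_sqrt (hs t ht)]
  rw [e1, e2, e3, one_mul] at key
  exact key

theorem veremyev_aux {V : Type*} [Fintype V] [DecidableEq V]
    (G : SimpleGraph V) [DecidableRel G.Adj]
    (γ : ℝ) (hγ : γ ∈ Set.Ioc (0 : ℝ) 1) :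
    {k : ℕ | ∃ (x : V → ℝ) (w : V → ℝ) (s : ℕ → ℝ),
        (∀ i, x i = 0 ∨ x i = 1) ∧
        (∀ i, w i ≤ (G.degree i : ℝ) * x i) ∧
        (∀ i, w i ≤ ∑ j ∈ G.neighborFinset i, x j) ∧
        (∀ t ∈ Finset.range (Fintype.card V + 1), 0 ≤ s t) ∧
        ∑ t ∈ Finset.range (Fintype.card V + 1), s t = 1 ∧
        ∑ i, x i = ∑ t ∈ Finset.range (Fintype.card V + 1), (t : ℝ) * s t ∧
        ∑ i, w i
          ≥ γ * ∑ t ∈ Finset.range (Fintype.card V + 1),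
              ((t : ℝ) * ((t : ℝ) - 1)) * s t ∧
        (Finset.univ.filter fun i => x i = 1).card = k}
      = {k : ℕ | ∃ V' : Finset V, (edgesIn G V' : ℝ) ≥ γ * (V'.card.choose 2 : ℕ) ∧ V'.card = k} := by
  obtain ⟨hγ0, hγ1⟩ := hγ
  set n := Fintype.card V with hn
  ext k
  simp only [Set.mem_setOf_eq]
  constructor
  · rintro ⟨x, w, s, hx01, hw1, hw2, hs0, hs1, hxs, hws, hcard⟩
    refine ⟨univ.filter fun i => x i = 1, ?_, hcard⟩
    set V' := univ.filter (fun i => x i = 1) with hV'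
    have hxind : ∀ i, x i = if i ∈ V' then (1 : ℝ) else 0 := by
      intro i
      rcases hx01 i with h | h
      · have hi : i ∉ V' := by simp [hV', h]
        simp [hi, h]
      · have hi : i ∈ V' := by simp [hV', h]
        simp [hi, h]
    have hsumx : ∑ i, x i = (k : ℝ) := by
      rw [← hcard]
      simp only [hxind]
      rw [Finset.sum_ite_mem, Finset.univ_inter, Finset.sum_const]
      simp
    have hnb : ∀ i, ∑ j ∈ G.neighborFinset i, x j = ((G.neighborFinset i ∩ V').card : ℝ) := by
      intro i
      simp only [hxind]
      rw [Finset.sum_ite_mem, Finset.sum_const]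
      simp
    have h2e : (2 : ℝ) * (edgesIn G V' : ℝ) = ∑ i ∈ V', ((G.neighborFinset i ∩ V').card : ℝ) := by
      have h := handshake G V'
      have : ((∑ i ∈ V', (G.neighborFinset i ∩ V').card : ℕ) : ℝ)
          = ((2 * edgesIn G V' : ℕ) : ℝ) := by exact_mod_cast h
      push_cast at this
      linarith
    have hwle : ∑ i, w i ≤ 2 * (edgesIn G V' : ℝ) := by
      calc ∑ i, w i
          ≤ ∑ i, (if i ∈ V' then ((G.neighborFinset i ∩ V').card : ℝ) else 0) := by
            apply Finset.sum_le_sum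
            intro i _
            by_cases hi : i ∈ V'
            · simpa [hi, ← hnb i] using hw2 i
            · have h := hw1 i
              rw [hxind i] at h
              simpa [hi] using h
        _ = ∑ i ∈ V', ((G.neighborFinset i ∩ V').card : ℝ) := by
            rw [Finset.sum_ite_mem, Finset.univ_inter]
        _ = 2 * (edgesIn G V' : ℝ) := h2e.symm
    have hm : ∑ t ∈ Finset.range (n + 1), (t : ℝ) * s t = (k : ℝ) := by rw [← hxs, hsumx]
    have hj := jensen_sq n s hs0 hs1
    have hq : ∑ t ∈ Finset.range (n + 1), ((t : ℝ) * ((t : ℝ) - 1)) * s t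
        ≥ (k : ℝ) * ((k : ℝ) - 1) := by
      have e : ∑ t ∈ Finset.range (n + 1), ((t : ℝ) * ((t : ℝ) - 1)) * s t
          = ∑ t ∈ Finset.range (n + 1), (t : ℝ) ^ 2 * s t
            - ∑ t ∈ Finset.range (n + 1), (t : ℝ) * s t := by
        rw [← Finset.sum_sub_distrib]
        exact Finset.sum_congr rfl fun t _ => by ring
      rw [e, hm]
      nlinarith [hj, hm]
    have h2c := choose_two_real k
    have hmul : γ * ((k : ℝ) * ((k : ℝ) - 1))
        ≤ γ * ∑ t ∈ Finset.range (n + 1), ((t : ℝ) * ((t : ℝ) - 1)) * s t :=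
      mul_le_mul_of_nonneg_left hq (le_of_lt hγ0)
    rw [hcard]
    nlinarith [hmul, hws, hwle, h2c]
  · rintro ⟨V', hqc, hcard⟩
    have hkn : k ≤ n := by
      rw [← hcard, hn, ← Finset.card_univ]
      exact Finset.card_le_univ V'
    have hkmem : k ∈ Finset.range (n + 1) := Finset.mem_range.mpr (Nat.lt_succ_of_le hkn)
    refine ⟨fun i => if i ∈ V' then 1 else 0,
      fun i => if i ∈ V' then ((G.neighborFinset i ∩ V').card : ℝ) else 0,
      fun t => if t = k then 1 else 0, ?_, ?_, ?_, ?_, ?_, ?_, ?_, ?_⟩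
    · intro i; by_cases hi : i ∈ V' <;> simp [hi]
    · intro i
      by_cases hi : i ∈ V'
      · simp only [hi, if_pos, mul_one]
        rw [← SimpleGraph.card_neighborFinset_eq_degree]
        exact_mod_cast Finset.card_le_card Finset.inter_subset_left
      · simp [hi]
    · intro i
      by_cases hi : i ∈ V'
      · have : ∑ j ∈ G.neighborFinset i, (if j ∈ V' then (1 : ℝ) else 0)
            = ((G.neighborFinset i ∩ V').card : ℝ) := by
          rw [Finset.sum_ite_mem, Finset.sum_const]
          simp
        simp [hi, this]
      · simp only [hi, if_neg, not_false_iff]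
        apply Finset.sum_nonneg
        intro j _
        by_cases hj : j ∈ V' <;> simp [hj]
    · intro t _; by_cases ht : t = k <;> simp [ht]
    · rw [Finset.sum_ite_eq' (Finset.range (n + 1)) k (fun _ => (1 : ℝ))]
      simp [hkmem]
    · have hl : ∑ i, (if i ∈ V' then (1 : ℝ) else 0) = (k : ℝ) := by
        rw [Finset.sum_ite_mem, Finset.univ_inter, Finset.sum_const, hcard]
        simp
      have hr : ∑ t ∈ Finset.range (n + 1), (t : ℝ) * (if t = k then 1 else 0) = (k : ℝ) := by
        simp [mul_ite, mul_one, mul_zero, Finset.sum_ite_eq', hkmem]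
      rw [hl, hr]
    · have hl : ∑ i, (if i ∈ V' then ((G.neighborFinset i ∩ V').card : ℝ) else 0)
          = 2 * (edgesIn G V' : ℝ) := by
        rw [Finset.sum_ite_mem, Finset.univ_inter]
        have h := handshake G V'
        have h2 : ((∑ i ∈ V', (G.neighborFinset i ∩ V').card : ℕ) : ℝ)
            = ((2 * edgesIn G V' : ℕ) : ℝ) := by exact_mod_cast h
        push_cast at h2
        linarith
      have hr : ∑ t ∈ Finset.range (n + 1), ((t : ℝ) * ((t : ℝ) - 1)) * (if t = k then 1 else 0)
          = (k : ℝ) * ((k : ℝ) - 1) := by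
        simp [mul_ite, mul_one, mul_zero, Finset.sum_ite_eq', hkmem]
      rw [hl, hr]
      have h2c := choose_two_real k
      rw [hcard] at hqc
      nlinarith [hqc, h2c]
    · rw [← hcard]
      congr 1
      ext i
      by_cases hi : i ∈ V' <;> simp [hi]

theorem veremyev_compact_mip_correct {V : Type*} [Fintype V] [DecidableEq V]
    (G : SimpleGraph V) [DecidableRel G.Adj]
    (γ : ℝ) (hγ : γ ∈ Set.Ioc (0 : ℝ) 1) :
    sSup {k : ℕ | ∃ (x : V → ℝ) (w : V → ℝ) (s : ℕ → ℝ),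
        (∀ i, x i = 0 ∨ x i = 1) ∧
        (∀ i, w i ≤ (G.degree i : ℝ) * x i) ∧
        (∀ i, w i ≤ ∑ j ∈ G.neighborFinset i, x j) ∧
        (∀ t ∈ Finset.range (Fintype.card V + 1), 0 ≤ s t) ∧
        ∑ t ∈ Finset.range (Fintype.card V + 1), s t = 1 ∧
        ∑ i, x i = ∑ t ∈ Finset.range (Fintype.card V + 1), (t : ℝ) * s t ∧
        ∑ i, w i
          ≥ γ * ∑ t ∈ Finset.range (Fintype.card V + 1),
              ((t : ℝ) * ((t : ℝ) - 1)) * s t ∧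
        (Finset.univ.filter fun i => x i = 1).card = k}
      = quasiCliqueNum G γ := by
  rw [quasiCliqueNum]
  congr 1
  rw [veremyev_aux G γ hγ]
  rfl
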